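/- Define the Rogers dilogarithm D₂(t) = -(1/2)·∫₀ᵗ ( log(1-s)/s + log(s)/(1-s) ) ds - π²/6 for 0 < t < 1. Then for all real x, y with 0 < x < y < 1: D₂(x) - D₂(y) - D₂(x/y) - D₂((1-y)/(1-x)) + D₂(x(1-y)/(y(1-x))) = 0. -/

import Mathlib

open Real MeasureTheory intervalIntegral Set Filter Topology

noncomputable def D2 (t : ℝ) : ℝ :=
  -(1/2) * (∫ s in (0:ℝ)..t, (Real.log (1 - s) / s + Real.log s / (1 - s))) - Real.pi^2 / 6

namespace AbelAux

lemma ff_meas : Measurable (fun s : ℝ => Real.log (1 - s) / s + Real.log s / (1 - s)) :=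
  ((Real.measurable_log.comp (measurable_const.sub measurable_id)).div measurable_id).add
    (Real.measurable_log.div (measurable_const.sub measurable_id))

lemma neg_log_le {s : ℝ} (h0 : 0 < s) : -Real.log s ≤ 2 * s ^ (-(1/2) : ℝ) := by
  have hs : (0:ℝ) < s ^ ((1:ℝ)/2) := Real.rpow_pos_of_pos h0 _
  have h := Real.log_le_sub_one_of_pos (show (0:ℝ) < (s ^ ((1:ℝ)/2))⁻¹ from inv_pos.2 hs)
  rw [Real.log_inv] at h
  have hlog : Real.log (s ^ ((1:ℝ)/2)) = (1/2) * Real.log s := Real.log_rpow h0 _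
  have hinv : (s ^ ((1:ℝ)/2))⁻¹ = s ^ (-(1/2) : ℝ) := by
    rw [← Real.rpow_neg h0.le]
  nlinarith [hs.le, Real.rpow_nonneg h0.le (-(1/2) : ℝ), hinv ▸ h]

lemma mul_neg_log_le {s : ℝ} (h0 : 0 < s) : -Real.log s * s ≤ 1 - s := by
  have h := Real.log_le_sub_one_of_pos (show (0:ℝ) < s⁻¹ from inv_pos.2 h0)
  rw [Real.log_inv] at h
  have := mul_le_mul_of_nonneg_right h h0.le
  rw [sub_mul, inv_mul_cancel₀ h0.ne'] at this
  nlinarith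

lemma p1_bound {s : ℝ} (h0 : 0 < s) (h1 : s ≤ 1) :
    |Real.log (1 - s) / s| ≤ 1 + 2 * (1 - s) ^ (-(1/2) : ℝ) := by
  rcases eq_or_lt_of_le h1 with rfl | h1
  · simp
  · have h1s : 0 < 1 - s := by linarith
    have hlog : Real.log (1 - s) ≤ 0 := Real.log_nonpos (by linarith) (by linarith)
    have habs : |Real.log (1 - s) / s| = -Real.log (1 - s) / s := by
      rw [abs_of_nonpos (div_nonpos_of_nonpos_of_nonneg hlog h0.le), neg_div]
    rw [habs]
    have key : -Real.log (1 - s) / s ≤ 1 - Real.log (1 - s) := by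
      rw [div_le_iff₀ h0]
      have := mul_neg_log_le h1s
      nlinarith
    have := neg_log_le h1s
    linarith

lemma p2_bound {s : ℝ} (h0 : 0 < s) (h1 : s ≤ 1) :
    |Real.log s / (1 - s)| ≤ 1 + 2 * s ^ (-(1/2) : ℝ) := by
  rcases eq_or_lt_of_le h1 with rfl | h1
  · simp
    norm_num
  · have h1s : 0 < 1 - s := by linarith
    have hlog : Real.log s ≤ 0 := Real.log_nonpos h0.le h1.le
    have habs : |Real.log s / (1 - s)| = -Real.log s / (1 - s) := by
      rw [abs_of_nonpos (div_nonpos_of_nonpos_of_nonneg hlog h1s.le), neg_div]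
    rw [habs]
    have key : -Real.log s / (1 - s) ≤ 1 - Real.log s := by
      rw [div_le_iff₀ h1s]
      have := mul_neg_log_le h0
      nlinarith
    have := neg_log_le h0
    linarith

lemma g2_int : IntervalIntegrable (fun s : ℝ => 1 + 2 * s ^ (-(1/2) : ℝ)) volume 0 1 :=
  intervalIntegrable_const.add ((intervalIntegrable_rpow' (by norm_num)).const_mul 2)

lemma g1_int : IntervalIntegrable (fun s : ℝ => 1 + 2 * (1 - s) ^ (-(1/2) : ℝ)) volume 0 1 := by
  simpa using (g2_int.comp_sub_left 1).symm

lemma p1_int : IntervalIntegrable (fun s : ℝ => Real.log (1 - s) / s) volume 0 1 := by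
  rw [intervalIntegrable_iff_integrableOn_Ioc_of_le (by norm_num)]
  have hg := g1_int
  rw [intervalIntegrable_iff_integrableOn_Ioc_of_le (by norm_num)] at hg
  refine hg.mono' ((Real.measurable_log.comp (measurable_const.sub measurable_id)).div
    measurable_id).aestronglyMeasurable ?_
  filter_upwards [ae_restrict_mem measurableSet_Ioc] with s hs
  rw [Real.norm_eq_abs]
  exact p1_bound hs.1 hs.2

lemma p2_int : IntervalIntegrable (fun s : ℝ => Real.log s / (1 - s)) volume 0 1 := by
  rw [intervalIntegrable_iff_integrableOn_Ioc_of_le (by norm_num)]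
  have hg := g2_int
  rw [intervalIntegrable_iff_integrableOn_Ioc_of_le (by norm_num)] at hg
  refine hg.mono' (Real.measurable_log.div
    (measurable_const.sub measurable_id)).aestronglyMeasurable ?_
  filter_upwards [ae_restrict_mem measurableSet_Ioc] with s hs
  rw [Real.norm_eq_abs]
  exact p2_bound hs.1 hs.2

lemma ff_int : IntervalIntegrable
    (fun s : ℝ => Real.log (1 - s) / s + Real.log s / (1 - s)) volume 0 1 :=
  p1_int.add p2_int

lemma ff_int' {t : ℝ} (h0 : 0 ≤ t) (h1 : t ≤ 1) :
    IntervalIntegrable (fun s : ℝ => Real.log (1 - s) / s + Real.log s / (1 - s)) volume 0 t :=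
  ff_int.mono_set (by
    rw [Set.uIcc_of_le h0, Set.uIcc_of_le (by norm_num)]
    exact Set.Icc_subset_Icc le_rfl h1)

lemma ff_contAt {t : ℝ} (h0 : 0 < t) (h1 : t < 1) :
    ContinuousAt (fun s : ℝ => Real.log (1 - s) / s + Real.log s / (1 - s)) t := by
  have h1t : (1:ℝ) - t ≠ 0 := by linarith
  exact (((continuousAt_const.sub continuousAt_id).log h1t).div continuousAt_id h0.ne').add
    ((continuousAt_id.log h0.ne').div (continuousAt_const.sub continuousAt_id) h1t)

lemma hasDerivAt_D2 {t : ℝ} (h0 : 0 < t) (h1 : t < 1) :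
    HasDerivAt D2 (-(1/2) * (Real.log (1 - t) / t + Real.log t / (1 - t))) t := by
  have hP : HasDerivAt (fun u => ∫ s in (0:ℝ)..u, (Real.log (1 - s) / s + Real.log s / (1 - s)))
      (Real.log (1 - t) / t + Real.log t / (1 - t)) t :=
    integral_hasDerivAt_right (ff_int' h0.le h1.le)
      (ff_meas.stronglyMeasurable.stronglyMeasurableAtFilter) (ff_contAt h0 h1)
  exact ((hP.const_mul (-(1/2))).sub_const _)

lemma hasSum_sq : HasSum (fun n : ℕ => 1/((n:ℝ)+1)^2) (π^2/6) := by
  have h2 := (hasSum_nat_add_iff' (f := fun n : ℕ => (1:ℝ)/(n:ℝ)^2) 1).2 hasSum_zeta_two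
  norm_num at h2
  convert h2 using 2 with n
  push_cast
  · rfl
  · ring

lemma hasSum_aux {s : ℝ} (h0 : 0 < s) (h1 : s < 1) :
    HasSum (fun n : ℕ => s ^ n / ((n:ℝ) + 1)) (-Real.log (1 - s) / s) := by
  have h := Real.hasSum_pow_div_log_of_abs_lt_one (x := s) (by rw [abs_of_pos h0]; exact h1)
  have h2 := h.div_const s
  have he : (fun n : ℕ => s ^ (n+1) / ((n:ℝ)+1) / s) = fun n : ℕ => s^n/((n:ℝ)+1) := by
    funext n
    rw [pow_succ]
    field_simp
  rw [he] at h2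
  exact h2

lemma integral_p1 : ∫ s in (0:ℝ)..1, Real.log (1 - s) / s = -(π^2/6) := by
  set μ := volume.restrict (Ioo (0:ℝ) 1) with hμdef
  have hval : ∀ n : ℕ, (∫ s, s ^ n / ((n:ℝ)+1) ∂μ) = 1/((n:ℝ)+1)^2 := by
    intro n
    rw [hμdef, ← integral_Ioc_eq_integral_Ioo,
      ← intervalIntegral.integral_of_le (by norm_num : (0:ℝ) ≤ 1),
      intervalIntegral.integral_div, integral_pow]
    have : ((n:ℝ)+1) ≠ 0 := by positivity
    field_simp
    ring
  have hF_int : ∀ n : ℕ, Integrable (fun s : ℝ => s ^ n / ((n:ℝ)+1)) μ := by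
    intro n
    have : IntegrableOn (fun s : ℝ => s ^ n / ((n:ℝ)+1)) (Ioo (0:ℝ) 1) volume :=
      (((continuous_pow n).div_const _).integrableOn_Icc (a := 0) (b := 1)).mono_set
        Ioo_subset_Icc_self
    exact this
  have hnorm : ∀ n : ℕ, (∫ s, ‖s ^ n / ((n:ℝ)+1)‖ ∂μ) = 1/((n:ℝ)+1)^2 := by
    intro n
    rw [← hval n, hμdef]
    apply setIntegral_congr_fun measurableSet_Ioo
    intro s hs
    exact Real.norm_of_nonneg (div_nonneg (pow_nonneg hs.1.le n) (by positivity))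
  have hsummable : Summable (fun n : ℕ => ∫ s, ‖s ^ n / ((n:ℝ)+1)‖ ∂μ) := by
    apply Summable.congr hasSum_sq.summable
    intro n; exact (hnorm n).symm
  have key := MeasureTheory.hasSum_integral_of_summable_integral_norm (μ := μ) hF_int hsummable
  rw [show (fun n : ℕ => ∫ s, s ^ n / ((n:ℝ)+1) ∂μ) = fun n : ℕ => 1/((n:ℝ)+1)^2
    from funext hval] at key
  have h2 : (∫ s, (∑' n : ℕ, s ^ n / ((n:ℝ)+1)) ∂μ) = ∫ s, -Real.log (1-s)/s ∂μ := by
    rw [hμdef]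
    apply setIntegral_congr_fun measurableSet_Ioo
    intro s hs
    exact (hasSum_aux hs.1 hs.2).tsum_eq
  rw [h2] at key
  have hfin : (∫ s, -Real.log (1-s)/s ∂μ) = π^2/6 := key.unique hasSum_sq
  rw [intervalIntegral.integral_of_le (by norm_num : (0:ℝ) ≤ 1), integral_Ioc_eq_integral_Ioo]
  have he : (fun s : ℝ => Real.log (1-s)/s) = fun s : ℝ => -(-Real.log (1-s)/s) := by
    funext s; ring
  rw [he, MeasureTheory.integral_neg, hfin]

lemma integral_p2 : ∫ s in (0:ℝ)..1, Real.log s / (1 - s) = -(π^2/6) := by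
  have h : ∫ s in (0:ℝ)..1, Real.log s / (1 - s)
      = ∫ s in (0:ℝ)..1, (fun u : ℝ => Real.log (1-u)/u) (1 - s) := by
    congr 1; funext s; simp
  rw [h, intervalIntegral.integral_comp_sub_left (fun u : ℝ => Real.log (1-u)/u) 1]
  norm_num [integral_p1]

lemma D2_contOn : ContinuousOn D2 (Icc (0:ℝ) 1) := by
  have h : IntegrableOn (fun s : ℝ => Real.log (1 - s) / s + Real.log s / (1 - s))
      (uIcc (0:ℝ) 1) volume := by
    rw [uIcc_of_le (by norm_num : (0:ℝ) ≤ 1), integrableOn_Icc_iff_integrableOn_Ioc]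
    exact (intervalIntegrable_iff_integrableOn_Ioc_of_le (by norm_num : (0:ℝ) ≤ 1)).1 ff_int
  have hP := intervalIntegral.continuousOn_primitive_interval h
  rw [uIcc_of_le (by norm_num : (0:ℝ) ≤ 1)] at hP
  exact (continuousOn_const.mul hP).sub continuousOn_const

lemma D2_one : D2 1 = 0 := by
  unfold D2
  rw [intervalIntegral.integral_add p1_int p2_int, integral_p1, integral_p2]
  ring

lemma D2_zero : D2 0 = -(π^2/6) := by
  unfold D2
  rw [intervalIntegral.integral_same]
  ring

lemma D2_tendsto_one : Tendsto D2 (𝓝[Icc (0:ℝ) 1] 1) (𝓝 0) := by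
  have h := D2_contOn 1 (by norm_num)
  rw [ContinuousWithinAt, D2_one] at h
  exact h

lemma D2_tendsto_zero : Tendsto D2 (𝓝[Icc (0:ℝ) 1] 0) (𝓝 (-(π^2/6))) := by
  have h := D2_contOn 0 (by norm_num)
  rw [ContinuousWithinAt, D2_zero] at h
  exact h

lemma key_alg (x z : ℝ) (hx : 0 < x) (hxz : x < z) (hz : z < 1) :
    0 - (-(1/2) * (Real.log (1 - z)/z + Real.log z/(1-z)))
      - (-(1/2) * (Real.log (1 - x/z)/(x/z) + Real.log (x/z)/(1 - x/z))) * ((0 * z - x * 1)/z^2)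
      - (-(1/2) * (Real.log (1 - (1-z)/(1-x))/((1-z)/(1-x))
          + Real.log ((1-z)/(1-x))/(1 - (1-z)/(1-x)))) * (-1/(1-x))
      + (-(1/2) * (Real.log (1 - x*(1-z)/(z*(1-x)))/(x*(1-z)/(z*(1-x)))
          + Real.log (x*(1-z)/(z*(1-x)))/(1 - x*(1-z)/(z*(1-x)))))
        * (((x * -1) * (z*(1-x)) - (x*(1-z)) * (1*(1-x))) / (z*(1-x))^2) = 0 := by
  have hz0 : (0:ℝ) < z := lt_trans hx hxz
  have h1x : (0:ℝ) < 1 - x := by linarith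
  have h1z : (0:ℝ) < 1 - z := by linarith
  have hzx : (0:ℝ) < z - x := by linarith
  have e1 : 1 - x/z = (z-x)/z := by field_simp
  have e2 : 1 - (1-z)/(1-x) = (z-x)/(1-x) := by field_simp; ring
  have e3 : 1 - x*(1-z)/(z*(1-x)) = (z-x)/(z*(1-x)) := by
    field_simp
    ring
  rw [e1, e2, e3, Real.log_div hzx.ne' hz0.ne', Real.log_div hx.ne' hz0.ne',
    Real.log_div hzx.ne' h1x.ne', Real.log_div h1z.ne' h1x.ne',
    Real.log_div hzx.ne' (by positivity : (z*(1-x)) ≠ 0),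
    Real.log_div (by positivity : (x*(1-z)) ≠ 0) (by positivity : (z*(1-x)) ≠ 0),
    Real.log_mul hx.ne' h1z.ne', Real.log_mul hz0.ne' h1x.ne']
  field_simp
  ring

end AbelAux

open AbelAux

theorem stmt_11 (x y : ℝ) (hx : 0 < x) (hxy : x < y) (hy : y < 1) :
    D2 x - D2 y - D2 (x/y) - D2 ((1-y)/(1-x)) + D2 (x*(1-y)/(y*(1-x))) = 0 := by
  have hy0 : (0:ℝ) < y := lt_trans hx hxy
  have hx1 : x < 1 := lt_trans hxy hy
  have h1x : (0:ℝ) < 1 - x := by linarith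
  set G : ℝ → ℝ := fun z => D2 x - D2 z - D2 (x/z) - D2 ((1-z)/(1-x))
    + D2 (x*(1-z)/(z*(1-x))) with hGdef
  -- derivative of G is zero on (x, 1)
  have hG' : ∀ z ∈ Ioo x 1, HasDerivAt G 0 z := by
    intro z hz
    have hz0 : (0:ℝ) < z := lt_trans hx hz.1
    have hz1 : z < 1 := hz.2
    have h1z : (0:ℝ) < 1 - z := by linarith
    have hxz : x < z := hz.1
    -- argument ranges
    have harg1 : 0 < x / z := div_pos hx hz0
    have harg1' : x / z < 1 := (div_lt_one hz0).2 hxz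
    have harg2 : 0 < (1-z)/(1-x) := div_pos h1z h1x
    have harg2' : (1-z)/(1-x) < 1 := (div_lt_one h1x).2 (by linarith)
    have harg3 : 0 < x*(1-z)/(z*(1-x)) := div_pos (by positivity) (by positivity)
    have harg3' : x*(1-z)/(z*(1-x)) < 1 := by
      rw [div_lt_one (by positivity)]
      nlinarith
    -- component derivatives
    have hA : HasDerivAt (fun w : ℝ => x / w) ((0 * z - x * 1)/z^2) z :=
      (hasDerivAt_const z x).div (hasDerivAt_id z) hz0.ne'
    have hB : HasDerivAt (fun w : ℝ => (1-w)/(1-x)) (-1/(1-x)) z :=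
      ((hasDerivAt_id z).const_sub 1).div_const (1-x)
    have hN : HasDerivAt (fun w : ℝ => x * (1 - w)) (x * -1) z :=
      ((hasDerivAt_id z).const_sub 1).const_mul x
    have hD : HasDerivAt (fun w : ℝ => w * (1-x)) (1 * (1-x)) z :=
      (hasDerivAt_id z).mul_const (1-x)
    have hC : HasDerivAt (fun w : ℝ => x*(1-w)/(w*(1-x)))
        (((x * -1) * (z*(1-x)) - (x*(1-z)) * (1*(1-x))) / (z*(1-x))^2) z :=
      hN.div hD (by positivity)
    have hc1 : HasDerivAt (fun w : ℝ => D2 (x/w))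
        ((-(1/2) * (Real.log (1 - x/z)/(x/z) + Real.log (x/z)/(1 - x/z))) * ((0 * z - x * 1)/z^2))
        z := (hasDerivAt_D2 harg1 harg1').comp z hA
    have hc2 : HasDerivAt (fun w : ℝ => D2 ((1-w)/(1-x)))
        ((-(1/2) * (Real.log (1 - (1-z)/(1-x))/((1-z)/(1-x))
          + Real.log ((1-z)/(1-x))/(1 - (1-z)/(1-x)))) * (-1/(1-x))) z :=
      HasDerivAt.comp (h₂ := D2) z (hasDerivAt_D2 harg2 harg2') hB
    have hc3 : HasDerivAt (fun w : ℝ => D2 (x*(1-w)/(w*(1-x))))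
        ((-(1/2) * (Real.log (1 - x*(1-z)/(z*(1-x)))/(x*(1-z)/(z*(1-x)))
          + Real.log (x*(1-z)/(z*(1-x)))/(1 - x*(1-z)/(z*(1-x)))))
          * (((x * -1) * (z*(1-x)) - (x*(1-z)) * (1*(1-x))) / (z*(1-x))^2)) z :=
      HasDerivAt.comp (h₂ := D2) z (hasDerivAt_D2 harg3 harg3') hC
    have hG0 : HasDerivAt G
        (0 - (-(1/2) * (Real.log (1 - z)/z + Real.log z/(1-z)))
          - (-(1/2) * (Real.log (1 - x/z)/(x/z) + Real.log (x/z)/(1 - x/z)))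
            * ((0 * z - x * 1)/z^2)
          - (-(1/2) * (Real.log (1 - (1-z)/(1-x))/((1-z)/(1-x))
              + Real.log ((1-z)/(1-x))/(1 - (1-z)/(1-x)))) * (-1/(1-x))
          + (-(1/2) * (Real.log (1 - x*(1-z)/(z*(1-x)))/(x*(1-z)/(z*(1-x)))
              + Real.log (x*(1-z)/(z*(1-x)))/(1 - x*(1-z)/(z*(1-x)))))
            * (((x * -1) * (z*(1-x)) - (x*(1-z)) * (1*(1-x))) / (z*(1-x))^2)) z :=
      ((((hasDerivAt_const z (D2 x)).sub (hasDerivAt_D2 hz0 hz1)).sub hc1).sub hc2).add hc3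
    rwa [key_alg x z hx hxz hz1] at hG0
  -- G is eventually constant equal to G y near 1 from the left, within Ioo y 1
  have hconst : ∀ z ∈ Ioo y 1, G z = G y := by
    intro z hz
    have hcont : ContinuousOn G (Icc y z) := by
      intro t ht
      exact (hG' t ⟨lt_of_lt_of_le hxy ht.1, lt_of_le_of_lt ht.2 hz.2⟩).continuousAt.continuousWithinAt
    have hderiv : ∀ t ∈ Ico y z, HasDerivWithinAt G 0 (Ici t) t := fun t ht =>
      (hG' t ⟨lt_of_lt_of_le hxy ht.1, lt_trans ht.2 hz.2⟩).hasDerivWithinAt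
    exact constant_of_has_deriv_right_zero hcont hderiv z ⟨hz.1.le, le_refl z⟩
  -- limit of G along 𝓝[Ioo y 1] 1 equals 0
  have hsub : Ioo y 1 ⊆ Icc (0:ℝ) 1 := fun z hz => ⟨le_of_lt (lt_trans hy0 hz.1), hz.2.le⟩
  have ht1 : Tendsto D2 (𝓝[Ioo y 1] 1) (𝓝 0) :=
    D2_tendsto_one.mono_left (nhdsWithin_mono 1 hsub)
  have ht2 : Tendsto (fun z : ℝ => D2 (x/z)) (𝓝[Ioo y 1] 1) (𝓝 (D2 x)) := by
    have hco : ContinuousAt D2 x := (hasDerivAt_D2 hx hx1).continuousAt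
    have harg : Tendsto (fun z : ℝ => x/z) (𝓝[Ioo y 1] 1) (𝓝 x) := by
      have h := (continuousAt_const.div continuousAt_id (one_ne_zero)
        : ContinuousAt (fun z : ℝ => x/z) 1)
      have h2 := h.tendsto.mono_left (nhdsWithin_le_nhds (s := Ioo y 1))
      rw [show ((fun _ : ℝ => x) / fun z : ℝ => z) 1 = x by simp] at h2
      exact h2
    exact hco.tendsto.comp harg
  have ht3 : Tendsto (fun z : ℝ => D2 ((1-z)/(1-x))) (𝓝[Ioo y 1] 1) (𝓝 (-(π^2/6))) := by
    apply D2_tendsto_zero.comp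
    rw [tendsto_nhdsWithin_iff]
    constructor
    · have h : ContinuousAt (fun z : ℝ => (1-z)/(1-x)) 1 :=
        (continuousAt_const.sub continuousAt_id).div_const _
      have h2 := h.tendsto.mono_left (nhdsWithin_le_nhds (s := Ioo y 1))
      simpa using h2
    · filter_upwards [self_mem_nhdsWithin] with z hz
      constructor
      · exact div_nonneg (by linarith [hz.2.le]) h1x.le
      · rw [div_le_one h1x]
        linarith [hz.1]
  have ht4 : Tendsto (fun z : ℝ => D2 (x*(1-z)/(z*(1-x)))) (𝓝[Ioo y 1] 1) (𝓝 (-(π^2/6))) := by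
    apply D2_tendsto_zero.comp
    rw [tendsto_nhdsWithin_iff]
    constructor
    · have h : ContinuousAt (fun z : ℝ => x*(1-z)/(z*(1-x))) 1 := by
        apply ContinuousAt.div
        · exact continuousAt_const.mul (continuousAt_const.sub continuousAt_id)
        · exact continuousAt_id.mul continuousAt_const
        · simp only [id_eq, one_mul]
          exact h1x.ne'
      have h2 := h.tendsto.mono_left (nhdsWithin_le_nhds (s := Ioo y 1))
      simp only [sub_self, mul_zero, zero_div, one_mul] at h2
      exact h2
    · filter_upwards [self_mem_nhdsWithin] with z hz
      have hz0 : (0:ℝ) < z := lt_trans hy0 hz.1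
      constructor
      · exact div_nonneg (by nlinarith [hz.2.le]) (by positivity)
      · rw [div_le_one (by positivity)]
        nlinarith [hz.1, hxy]
  have htot : Tendsto G (𝓝[Ioo y 1] 1)
      (𝓝 (D2 x - 0 - D2 x - (-(π^2/6)) + (-(π^2/6)))) :=
    ((((tendsto_const_nhds).sub ht1).sub ht2).sub ht3).add ht4
  have hval : D2 x - 0 - D2 x - (-(π^2/6)) + (-(π^2/6)) = 0 := by ring
  rw [hval] at htot
  -- G is eventually equal to the constant G y
  have hne : (𝓝[Ioo y 1] (1:ℝ)).NeBot := right_nhdsWithin_Ioo_neBot hy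
  have htot2 : Tendsto G (𝓝[Ioo y 1] 1) (𝓝 (G y)) := by
    apply Tendsto.congr' _ tendsto_const_nhds
    filter_upwards [self_mem_nhdsWithin] with z hz
    exact (hconst z hz).symm
  have : G y = 0 := tendsto_nhds_unique htot2 htot
  exact this
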